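/- Let ℵ be an infinite cardinal, let F be a graph of order ℵ with no dominating set of cardinality less than ℵ, let Θ be an ℵ-small subgraph of the complete graph K_ℵ, and let σ: G → Γ be an embedding in Σ_ℵ(F, K_ℵ \ Θ). Then: (1) for every vertex v of F there exists an embedding σ': G' → Γ' in Σ_ℵ(F, K_ℵ \ Θ) with |V(G')| ≤ |V(G)| + 1, σ ≤ σ', and v ∈ V(G'); and (2) for every vertex x of K_ℵ there exists an embedding σ'': G'' → Γ'' in Σ_ℵ(F, K_ℵ \ Θ) with |V(G'')| ≤ |V(G)| + 1, σ ≤ σ'', and x ∈ V(Γ''). -/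

import Mathlib

universe u

/-- A set `D` of vertices is dominating if every vertex not in `D` is adjacent to
some vertex of `D`. -/
def IsDominatingSet {V : Type*} (F : SimpleGraph V) (D : Set V) : Prop :=
  ∀ v ∉ D, ∃ d ∈ D, F.Adj v d

/-- An element of `Σ_ℵ(F, Λ)`: a graph embedding of an induced `ℵ`-small subgraph
of `F` (the one induced on `dom`) onto a subgraph of `Λ` (its image). -/
structure PartialEmb {V X : Type u} (ℵ : Cardinal.{u})
    (F : SimpleGraph V) (Λ : SimpleGraph X) : Type u where
  /-- the vertex set of the induced subgraph of `F` being embedded -/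
  dom : Set V
  /-- the underlying vertex map -/
  toFun : V → X
  /-- the domain is `ℵ`-small -/
  small : Cardinal.mk ↥dom < ℵ
  /-- the map is injective on the domain -/
  injOn : Set.InjOn toFun dom
  /-- edges of the induced subgraph are sent to edges of `Λ`, so that the image of
  the induced subgraph on `dom` is a subgraph of `Λ` -/
  adjMap : ∀ a ∈ dom, ∀ b ∈ dom, F.Adj a b → Λ.Adj (toFun a) (toFun b)

/-- The extension order on `Σ_ℵ(F, Λ)`: `σ ≤ σ'` iff `σ'` extends `σ`. -/
def PartialEmb.le {V X : Type u} {ℵ : Cardinal.{u}}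
    {F : SimpleGraph V} {Λ : SimpleGraph X}
    (σ σ' : PartialEmb ℵ F Λ) : Prop :=
  σ.dom ⊆ σ'.dom ∧ Set.EqOn σ.toFun σ'.toFun σ.dom

lemma PartialEmb.extend {V X : Type u} {ℵ : Cardinal.{u}} (hℵ : Cardinal.aleph0 ≤ ℵ)
    {F : SimpleGraph V} {Λ : SimpleGraph X}
    (σ : PartialEmb ℵ F Λ) (v : V) (x : X) (hv : v ∉ σ.dom)
    (hx : x ∉ σ.toFun '' σ.dom)
    (hadj : ∀ b ∈ σ.dom, F.Adj v b → Λ.Adj x (σ.toFun b)) :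
    ∃ σ' : PartialEmb ℵ F Λ, Cardinal.mk ↥σ'.dom ≤ Cardinal.mk ↥σ.dom + 1 ∧
      σ.le σ' ∧ v ∈ σ'.dom ∧ σ'.toFun v = x := by
  haveI : DecidableEq V := Classical.decEq V
  have hcard : Cardinal.mk ↥(insert v σ.dom) ≤ Cardinal.mk ↥σ.dom + 1 := by
    rw [Cardinal.mk_insert hv]
  refine ⟨⟨insert v σ.dom, Function.update σ.toFun v x, ?_, ?_, ?_⟩, hcard, ⟨?_, ?_⟩,
    Set.mem_insert _ _, Function.update_self _ _ _⟩
  · exact lt_of_le_of_lt hcard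
      (Cardinal.add_lt_of_lt hℵ σ.small (lt_of_lt_of_le Cardinal.one_lt_aleph0 hℵ))
  · intro a ha b hb hab
    rcases ha with rfl | ha <;> rcases hb with rfl | hb
    · rfl
    · exfalso
      rw [Function.update_self, Function.update_of_ne (ne_of_mem_of_not_mem hb hv)] at hab
      exact hx ⟨b, hb, hab.symm⟩
    · exfalso
      rw [Function.update_self, Function.update_of_ne (ne_of_mem_of_not_mem ha hv)] at hab
      exact hx ⟨a, ha, hab⟩
    · rw [Function.update_of_ne (ne_of_mem_of_not_mem ha hv),
        Function.update_of_ne (ne_of_mem_of_not_mem hb hv)] at hab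
      exact σ.injOn ha hb hab
  · intro a ha b hb hab
    rcases ha with rfl | ha <;> rcases hb with rfl | hb
    · exact absurd hab (F.loopless.irrefl _)
    · rw [Function.update_self, Function.update_of_ne (ne_of_mem_of_not_mem hb hv)]
      exact hadj b hb hab
    · rw [Function.update_self, Function.update_of_ne (ne_of_mem_of_not_mem ha hv)]
      exact (hadj a ha hab.symm).symm
    · rw [Function.update_of_ne (ne_of_mem_of_not_mem ha hv),
        Function.update_of_ne (ne_of_mem_of_not_mem hb hv)]
      exact σ.adjMap a ha b hb hab
  · exact Set.subset_insert _ _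
  · intro a ha
    exact (Function.update_of_ne (ne_of_mem_of_not_mem ha hv) _ _).symm

/-- let `F` be a graph of infinite order `ℵ` with no dominating set of
cardinality `< ℵ`, let `Θ` be an `ℵ`-small subgraph of the complete graph `K_ℵ`, and
let `σ ∈ Σ_ℵ(F, K_ℵ \ Θ)`. Then (1) every vertex `v` of `F` lies in the domain of
some extension `σ'` of `σ` in `Σ_ℵ(F, K_ℵ \ Θ)` whose domain has at most one more
vertex, and (2) every vertex `x` of `K_ℵ` lies in the image of some extension `σ''`
of `σ` in `Σ_ℵ(F, K_ℵ \ Θ)` whose domain has at most one more vertex. -/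
theorem stmt_10 {V X : Type u} (ℵ : Cardinal.{u}) (hℵ : Cardinal.aleph0 ≤ ℵ)
    (hV : Cardinal.mk V = ℵ) (hX : Cardinal.mk X = ℵ)
    (F : SimpleGraph V)
    (hdom : ∀ D : Set V, IsDominatingSet F D → ℵ ≤ Cardinal.mk ↥D)
    (Θ : (⊤ : SimpleGraph X).Subgraph) (hΘ : Cardinal.mk ↥Θ.verts < ℵ)
    (σ : PartialEmb ℵ F ((⊤ : SimpleGraph X) \ Θ.spanningCoe)) :
    (∀ v : V, ∃ σ' : PartialEmb ℵ F ((⊤ : SimpleGraph X) \ Θ.spanningCoe),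
        Cardinal.mk ↥σ'.dom ≤ Cardinal.mk ↥σ.dom + 1 ∧ σ.le σ' ∧ v ∈ σ'.dom) ∧
      ∀ x : X, ∃ σ'' : PartialEmb ℵ F ((⊤ : SimpleGraph X) \ Θ.spanningCoe),
        Cardinal.mk ↥σ''.dom ≤ Cardinal.mk ↥σ.dom + 1 ∧ σ.le σ'' ∧
          x ∈ σ''.toFun '' σ''.dom := by
  have hself : σ.le σ := ⟨subset_rfl, fun a _ => rfl⟩
  have hbound : Cardinal.mk ↥σ.dom ≤ Cardinal.mk ↥σ.dom + 1 := le_self_add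
  constructor
  · intro v
    by_cases hv : v ∈ σ.dom
    · exact ⟨σ, hbound, hself, hv⟩
    · -- find a fresh image vertex
      have hS : Cardinal.mk ↥(Θ.verts ∪ σ.toFun '' σ.dom) < Cardinal.mk X := by
        rw [hX]
        refine lt_of_le_of_lt (Cardinal.mk_union_le _ _)
          (Cardinal.add_lt_of_lt hℵ hΘ ?_)
        exact lt_of_le_of_lt (Cardinal.mk_image_le) σ.small
      have hex : ∃ x, x ∉ Θ.verts ∪ σ.toFun '' σ.dom := by
        by_contra h
        push_neg at h
        have : Θ.verts ∪ σ.toFun '' σ.dom = Set.univ := Set.eq_univ_of_forall h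
        rw [this, Cardinal.mk_univ] at hS
        exact lt_irrefl _ hS
      obtain ⟨x, hx⟩ := hex
      have hx1 : x ∉ Θ.verts := fun h => hx (Or.inl h)
      have hx2 : x ∉ σ.toFun '' σ.dom := fun h => hx (Or.inr h)
      obtain ⟨σ', h1, h2, h3, _⟩ := σ.extend hℵ v x hv hx2 (by
        intro b hb _
        rw [SimpleGraph.sdiff_adj]
        refine ⟨?_, fun h => hx1 ((SimpleGraph.Subgraph.spanningCoe_adj _ _ _).mp h).fst_mem⟩
        exact SimpleGraph.top_adj _ _ |>.mpr (fun h => hx2 ⟨b, hb, h.symm⟩))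
      exact ⟨σ', h1, h2, h3⟩
  · intro x
    by_cases hx : x ∈ σ.toFun '' σ.dom
    · exact ⟨σ, hbound, hself, hx⟩
    · have hnd : ¬ IsDominatingSet F σ.dom := fun h =>
        absurd σ.small (not_lt.mpr (hdom _ h))
      rw [IsDominatingSet] at hnd
      push_neg at hnd
      obtain ⟨v, hv, hnadj⟩ := hnd
      obtain ⟨σ', h1, h2, h3, h4⟩ := σ.extend hℵ v x hv hx (by
        intro b hb hab
        exact absurd hab (hnadj b hb))
      exact ⟨σ', h1, h2, ⟨v, h3, h4⟩⟩
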